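/- Let A ∈ ℝ^{p×o} and B ∈ ℝ^{q×o} with q ≥ o. Then ABᵀ = 0 if and only if there exist orthogonal matrices Ψ_A ∈ O(p), Ψ_B ∈ O(q), Φ ∈ O(o), and rectangular diagonal matrices Σ_A ∈ ℝ^{p×o}, Σ_B ∈ ℝ^{q×o} with nonnegative diagonal entries, such that A = Ψ_A Σ_A Φᵀ and B = Ψ_B Σ_B Φᵀ are singular value decompositions of A and B, and Σ_A Σ_Bᵀ = 0. -/

import Mathlib

open Matrix

/-- A real square matrix is orthogonal. -/
def IsOrth {n : ℕ} (M : Matrix (Fin n) (Fin n) ℝ) : Prop := Mᵀ * M = 1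

/-- A rectangular diagonal matrix with nonnegative diagonal entries. -/
def IsRectDiag {p o : ℕ} (S : Matrix (Fin p) (Fin o) ℝ) : Prop :=
  (∀ (i : Fin p) (j : Fin o), (i : ℕ) ≠ (j : ℕ) → S i j = 0) ∧ ∀ i j, 0 ≤ S i j

open Matrix

noncomputable section
namespace Stmt13Aux
open Matrix

def rdiag (p : ℕ) {o : ℕ} (σ : Fin o → ℝ) : Matrix (Fin p) (Fin o) ℝ :=
  Matrix.of fun i j => if (i : ℕ) = (j : ℕ) then σ j else 0

lemma hinner {p : ℕ} (f g : Fin p → ℝ) :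
    (inner ℝ ((WithLp.equiv 2 (Fin p → ℝ)).symm f) ((WithLp.equiv 2 (Fin p → ℝ)).symm g) : ℝ)
      = ∑ x, f x * g x := by
  simp [EuclideanSpace.inner_eq_star_dotProduct, dotProduct, mul_comm]

lemma svd_step {p o : ℕ} (C : Matrix (Fin p) (Fin o) ℝ) (σ : Fin o → ℝ)
    (h : Cᵀ * C = Matrix.diagonal fun k => σ k ^ 2)
    (hsupp : ∀ k, σ k ≠ 0 → (k : ℕ) < p) :
    ∃ Ψ : Matrix (Fin p) (Fin p) ℝ, IsOrth Ψ ∧ C = Ψ * rdiag p σ := by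
  classical
  have hcol : ∀ j k : Fin o, (∑ x, C x j * C x k) = if j = k then σ j ^ 2 else 0 := by
    intro j k
    have := congrFun (congrFun h j) k
    simpa [Matrix.mul_apply, Matrix.diagonal_apply, Matrix.transpose_apply] using this
  set v : Fin p → EuclideanSpace ℝ (Fin p) :=
    fun i => if h : (i : ℕ) < o then
      (σ ⟨i, h⟩)⁻¹ • ((WithLp.equiv 2 _).symm (fun x => C x ⟨i, h⟩)) else 0 with hv
  set s : Set (Fin p) := {i | ∃ h : (i : ℕ) < o, σ ⟨i, h⟩ ≠ 0} with hs
  have hortho : Orthonormal ℝ (s.restrict v) := by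
    rw [orthonormal_iff_ite]
    rintro ⟨i, hio, hiσ⟩ ⟨j, hjo, hjσ⟩
    have hij : (inner ℝ (v i) (v j) : ℝ)
        = (σ ⟨i, hio⟩)⁻¹ * ((σ ⟨j, hjo⟩)⁻¹ * ∑ x, C x ⟨i, hio⟩ * C x ⟨j, hjo⟩) := by
      rw [hv]
      simp only [hio, hjo, dif_pos]
      rw [real_inner_smul_left, real_inner_smul_right, hinner]
    change (inner ℝ (v i) (v j) : ℝ) = _
    rw [hij, hcol]
    simp only [Subtype.ext_iff, Fin.ext_iff]
    by_cases hn : (i : ℕ) = (j : ℕ)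
    · have e1 : (⟨(j : ℕ), hjo⟩ : Fin o) = ⟨(i : ℕ), hio⟩ := Fin.ext hn.symm
      have hσi : σ ⟨(i : ℕ), hio⟩ ≠ 0 := hiσ
      simp only [hn, if_pos rfl, e1]
      field_simp
      simp
    · simp [hn]
  obtain ⟨b, hb⟩ := hortho.exists_orthonormalBasis_extension_of_card_eq
    (by simp [finrank_euclideanSpace])
  refine ⟨Matrix.of fun x i => b i x, ?_, ?_⟩
  · ext i j
    have := b.orthonormal
    rw [orthonormal_iff_ite] at this
    have h2 := this i j
    rw [EuclideanSpace.inner_eq_star_dotProduct] at h2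
    simpa [Matrix.mul_apply, Matrix.transpose_apply, Matrix.one_apply, dotProduct, mul_comm]
      using h2
  · ext x k
    rw [Matrix.mul_apply]
    have hsum : ∑ i : Fin p, (Matrix.of fun x i => b i x) x i * rdiag p σ i k
        = ∑ i : Fin p, if i.val = k.val then b i x * σ k else 0 := by
      apply Finset.sum_congr rfl
      intro i _
      by_cases hik : (i : ℕ) = (k : ℕ) <;> simp [rdiag, hik]
    rw [hsum]
    by_cases hσ : σ k = 0
    · have hCk : C x k = 0 := by
        have h1 := hcol k k
        simp [hσ] at h1
        have : ∀ y, C y k * C y k = 0 := by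
          intro y
          have hnn : ∀ y ∈ Finset.univ, (0:ℝ) ≤ C y k * C y k := fun y _ => mul_self_nonneg _
          exact (Finset.sum_eq_zero_iff_of_nonneg hnn).1 h1 y (Finset.mem_univ y)
        exact mul_self_eq_zero.1 (this x)
      rw [hCk]
      symm
      apply Finset.sum_eq_zero
      intro i _
      by_cases hik : (i:ℕ) = (k:ℕ) <;> simp [hik, hσ]
    · have hkp : (k : ℕ) < p := hsupp k hσ
      set i0 : Fin p := ⟨k, hkp⟩ with hi0
      rw [Finset.sum_eq_single i0]
      · have hi0s : i0 ∈ s := ⟨by simp [hi0], by simpa using hσ⟩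
        have hb0 := hb i0 hi0s
        have hval : (⟨(i0 : ℕ), by simp [hi0]⟩ : Fin o) = k := Fin.ext (by simp [hi0])
        have hbx : b i0 x = (σ k)⁻¹ * C x k := by
          rw [hb0, hv]
          simp only [dif_pos (show ((i0:ℕ) < o) by simp [hi0])]
          simp only [hval]
          simp [PiLp.smul_apply, hi0]
        simp only [if_pos (show (i0:ℕ) = (k:ℕ) from rfl), hbx]
        field_simp
      · intro i _ hi
        have : (i:ℕ) ≠ (k:ℕ) := fun hc => hi (Fin.ext hc)
        simp [this]
      · intro hcon
        exact absurd (Finset.mem_univ i0) hcon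

end Stmt13Aux
end

open Matrix

noncomputable section
namespace Stmt13Aux2
open Matrix

lemma gram_diag {o : ℕ} (M Φ : Matrix (Fin o) (Fin o) ℝ) (μ : Fin o → ℝ)
    (horth : Φᵀ * Φ = 1)
    (heig : ∀ j, M *ᵥ (fun i => Φ i j) = μ j • fun i => Φ i j) :
    Φᵀ * (M * Φ) = Matrix.diagonal μ := by
  ext i j
  have hcol : ∀ k, (M * Φ) k j = μ j * Φ k j := by
    intro k
    have := congrFun (heig j) k
    simpa [Matrix.mulVec, Matrix.mul_apply, dotProduct] using this
  rw [Matrix.mul_apply]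
  simp only [Matrix.transpose_apply, hcol]
  have h1 : ∑ k, Φ k i * (μ j * Φ k j) = μ j * ∑ k, Φ k i * Φ k j := by
    rw [Finset.mul_sum]
    exact Finset.sum_congr rfl fun k _ => by ring
  have h2 : ∑ k, Φ k i * Φ k j = (Φᵀ * Φ) i j := by
    simp [Matrix.mul_apply, Matrix.transpose_apply]
  rw [h1, h2, horth]
  by_cases hij : i = j <;> simp [hij, Matrix.one_apply, Matrix.diagonal_apply]

lemma card_le {o p : ℕ} (M : Matrix (Fin o) (Fin p) ℝ) (d : Fin o → ℝ)
    (φ : Fin o → EuclideanSpace ℝ (Fin o)) (hφ : Orthonormal ℝ φ)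
    (hmem : ∀ j, 0 < d j → ∃ y, M *ᵥ y = (WithLp.equiv 2 (Fin o → ℝ)) (φ j)) :
    Fintype.card {j // 0 < d j} ≤ p := by
  classical
  set W : Submodule ℝ (Fin o → ℝ) := LinearMap.range M.mulVecLin with hW
  have hWfin : Module.finrank ℝ W ≤ p := by
    have := LinearMap.finrank_range_le M.mulVecLin
    simpa [Module.finrank_pi] using this
  set e := WithLp.linearEquiv 2 ℝ (Fin o → ℝ) with he
  set W' : Submodule ℝ (EuclideanSpace ℝ (Fin o)) := W.comap (e : _ →ₗ[ℝ] _) with hW'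
  have hW'fin : Module.finrank ℝ W' = Module.finrank ℝ W :=
    (LinearEquiv.ofSubmodule' e W).finrank_eq
  have hmem' : ∀ j : {j // 0 < d j}, φ j.1 ∈ W' := by
    rintro ⟨j, hj⟩
    obtain ⟨y, hy⟩ := hmem j hj
    exact ⟨y, hy⟩
  have hli : LinearIndependent ℝ (fun j : {j // 0 < d j} => φ j.1) :=
    hφ.linearIndependent.comp Subtype.val Subtype.val_injective
  have hli' : LinearIndependent ℝ (fun j : {j // 0 < d j} => (⟨φ j.1, hmem' j⟩ : W')) := by
    apply LinearIndependent.of_comp W'.subtype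
    exact hli
  have := hli'.fintype_card_le_finrank
  omega
end Stmt13Aux2

open Matrix
noncomputable section
namespace Stmt13Aux3

lemma quad {p o : ℕ} (M : Matrix (Fin p) (Fin o) ℝ) (y : Fin o → ℝ) :
    y ⬝ᵥ ((Mᵀ * M) *ᵥ y) = (M *ᵥ y) ⬝ᵥ (M *ᵥ y) := by
  rw [← Matrix.mulVec_mulVec, Matrix.dotProduct_mulVec, Matrix.vecMul_transpose]

lemma quad_nonneg {p o : ℕ} (M : Matrix (Fin p) (Fin o) ℝ) (y : Fin o → ℝ) :
    0 ≤ y ⬝ᵥ ((Mᵀ * M) *ᵥ y) := by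
  rw [quad]
  exact Finset.sum_nonneg fun i _ => mul_self_nonneg _

lemma eig_split {p q o : ℕ} {A : Matrix (Fin p) (Fin o) ℝ} {B : Matrix (Fin q) (Fin o) ℝ}
    (h0 : A * Bᵀ = 0) (u : Fin o → ℝ) (dj : ℝ)
    (hu : (Aᵀ * A - Bᵀ * B) *ᵥ u = dj • u) :
    (Aᵀ * A) *ᵥ u = max dj 0 • u ∧ (Bᵀ * B) *ᵥ u = max (-dj) 0 • u := by
  have hBA : B * Aᵀ = 0 := by
    have := congrArg Matrix.transpose h0
    simpa [Matrix.transpose_mul] using this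
  have hGH : (Aᵀ * A) * (Bᵀ * B) = 0 := by
    calc (Aᵀ * A) * (Bᵀ * B) = Aᵀ * ((A * Bᵀ) * B) := by
          rw [Matrix.mul_assoc, ← Matrix.mul_assoc A]
    _ = 0 := by rw [h0, Matrix.zero_mul, Matrix.mul_zero]
  have hHG : (Bᵀ * B) * (Aᵀ * A) = 0 := by
    calc (Bᵀ * B) * (Aᵀ * A) = Bᵀ * ((B * Aᵀ) * A) := by
          rw [Matrix.mul_assoc, ← Matrix.mul_assoc B]
    _ = 0 := by rw [hBA, Matrix.zero_mul, Matrix.mul_zero]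
  set z := (Aᵀ * A) *ᵥ u with hz
  set w := (Bᵀ * B) *ᵥ u with hw
  have hzw : z - w = dj • u := by
    rw [hz, hw, ← Matrix.sub_mulVec]
    exact hu
  have hGw : (Aᵀ * A) *ᵥ w = 0 := by
    rw [hw, Matrix.mulVec_mulVec, hGH, Matrix.zero_mulVec]
  have hHz : (Bᵀ * B) *ᵥ z = 0 := by
    rw [hz, Matrix.mulVec_mulVec, hHG, Matrix.zero_mulVec]
  rcases lt_trichotomy dj 0 with hd | hd | hd
  · -- dj < 0 : z = 0, w = (-dj) • u
    have hGz : (Aᵀ * A) *ᵥ z = dj • z := by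
      have := congrArg (fun v => (Aᵀ * A) *ᵥ v) hzw
      simpa [Matrix.mulVec_sub, Matrix.mulVec_smul, hGw] using this
    have h1 : z ⬝ᵥ ((Aᵀ * A) *ᵥ z) = dj * (z ⬝ᵥ z) := by
      rw [hGz, dotProduct_smul, smul_eq_mul]
    have h2 := quad_nonneg A z
    have h3 : 0 ≤ z ⬝ᵥ z := Finset.sum_nonneg fun i _ => mul_self_nonneg _
    have hzz : z ⬝ᵥ z = 0 := by nlinarith
    have hz0 : z = 0 := dotProduct_self_eq_zero.1 hzz
    have hw0 : w = (-dj) • u := by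
      have : -w = dj • u := by rw [← hzw, hz0]; abel
      rw [neg_smul, ← this]
      abel
    constructor
    · rw [hz0, max_eq_right hd.le, zero_smul]
    · rw [hw0, max_eq_left (by linarith)]
  · -- dj = 0
    have hzw0 : z = w := by
      have := hzw
      rw [hd, zero_smul, sub_eq_zero] at this
      exact this
    have hsym : (Aᵀ * A)ᵀ = Aᵀ * A := by
      rw [Matrix.transpose_mul, Matrix.transpose_transpose]
    have hzw' : w ⬝ᵥ z = 0 := by
      rw [hz, Matrix.dotProduct_mulVec, ← hsym, Matrix.vecMul_transpose, hGw,
        zero_dotProduct]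
    have hzz : z ⬝ᵥ z = 0 := by
      rw [hzw0] at hzw' ⊢
      exact hzw'
    have hz0 : z = 0 := dotProduct_self_eq_zero.1 hzz
    have hw0 : w = 0 := by rw [← hzw0, hz0]
    rw [hd]
    simp [hz0, hw0]
  · -- dj > 0 : w = 0, z = dj • u
    have hHw : (Bᵀ * B) *ᵥ w = (-dj) • w := by
      have := congrArg (fun v => (Bᵀ * B) *ᵥ v) hzw
      simp only [Matrix.mulVec_sub, Matrix.mulVec_smul, hHz] at this
      have h' : -((Bᵀ * B) *ᵥ w) = dj • w := by
        rw [← this]; abel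
      rw [neg_smul, ← h']
      abel
    have h1 : w ⬝ᵥ ((Bᵀ * B) *ᵥ w) = -dj * (w ⬝ᵥ w) := by
      rw [hHw, dotProduct_smul, smul_eq_mul]
    have h2 := quad_nonneg B w
    have h3 : 0 ≤ w ⬝ᵥ w := Finset.sum_nonneg fun i _ => mul_self_nonneg _
    have hww : w ⬝ᵥ w = 0 := by nlinarith
    have hw0 : w = 0 := dotProduct_self_eq_zero.1 hww
    have hz0 : z = dj • u := by
      rw [← hzw, hw0]; abel
    constructor
    · rw [hz0, max_eq_left hd.le]
    · rw [hw0, max_eq_right (by linarith), zero_smul]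
end Stmt13Aux3

theorem stmt13 {p o q : ℕ} (hq : o ≤ q)
    (A : Matrix (Fin p) (Fin o) ℝ) (B : Matrix (Fin q) (Fin o) ℝ) :
    A * Bᵀ = 0 ↔
      ∃ (PsiA : Matrix (Fin p) (Fin p) ℝ) (PsiB : Matrix (Fin q) (Fin q) ℝ)
        (Phi : Matrix (Fin o) (Fin o) ℝ)
        (SA : Matrix (Fin p) (Fin o) ℝ) (SB : Matrix (Fin q) (Fin o) ℝ),
        IsOrth PsiA ∧ IsOrth PsiB ∧ IsOrth Phi ∧ IsRectDiag SA ∧ IsRectDiag SB ∧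
        A = PsiA * SA * Phiᵀ ∧ B = PsiB * SB * Phiᵀ ∧ SA * SBᵀ = 0 := by
  classical
  constructor
  · intro h0
    -- the symmetric matrix S = AᵀA - BᵀB
    have hherm : (Aᵀ * A - Bᵀ * B).IsHermitian := by
      have h1 : (Aᵀ * A)ᵀ = Aᵀ * A := by
        rw [Matrix.transpose_mul, Matrix.transpose_transpose]
      have h2 : (Bᵀ * B)ᵀ = Bᵀ * B := by
        rw [Matrix.transpose_mul, Matrix.transpose_transpose]
      show (Aᵀ * A - Bᵀ * B)ᴴ = _
      have : ∀ M : Matrix (Fin o) (Fin o) ℝ, Mᴴ = Mᵀ := fun M => by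
        ext i j; simp [Matrix.conjTranspose_apply]
      rw [this, Matrix.transpose_sub, h1, h2]
    set d : Fin o → ℝ := hherm.eigenvalues with hd
    set φ0 := hherm.eigenvectorBasis with hφ0
    set w0 : Fin o → (Fin o → ℝ) := fun j => (WithLp.equiv 2 (Fin o → ℝ)) (φ0 j) with hw0
    have heig : ∀ j, (Aᵀ * A - Bᵀ * B) *ᵥ w0 j = d j • w0 j := fun j =>
      hherm.mulVec_eigenvectorBasis j
    have hsplit : ∀ j, (Aᵀ * A) *ᵥ w0 j = max (d j) 0 • w0 j ∧
        (Bᵀ * B) *ᵥ w0 j = max (-(d j)) 0 • w0 j := fun j =>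
      Stmt13Aux3.eig_split h0 (w0 j) (d j) (heig j)
    -- counting positive eigenvalues
    have hcnt : Fintype.card {j : Fin o // 0 < d j} ≤ p := by
      apply Stmt13Aux2.card_le Aᵀ d φ0 φ0.orthonormal
      intro j hj
      refine ⟨(d j)⁻¹ • (A *ᵥ w0 j), ?_⟩
      rw [Matrix.mulVec_smul, Matrix.mulVec_mulVec, (hsplit j).1,
        max_eq_left hj.le, smul_smul, inv_mul_cancel₀ hj.ne', one_smul]
    set π := Tuple.sort (fun j => -(d j)) with hπ
    have hmono := Tuple.monotone_sort (fun j => -(d j))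
    have hpos_lt : ∀ j : Fin o, 0 < d (π j) → (j : ℕ) < p := by
      intro j hj
      set T := Finset.univ.filter (fun i : Fin o => 0 < d i) with hT
      have hTcard : Fintype.card {j : Fin o // 0 < d j} = T.card := Fintype.card_subtype _
      have h1 : ∀ i ∈ Finset.Iic j, π i ∈ T := by
        intro i hi
        have hle : -(d (π i)) ≤ -(d (π j)) := hmono (Finset.mem_Iic.1 hi)
        simp only [hT, Finset.mem_filter, Finset.mem_univ, true_and]
        linarith
      have h2 : Set.InjOn π (Finset.Iic j) := fun a _ b _ hab => π.injective hab
      have h3 := Finset.card_le_card_of_injOn π h1 h2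
      rw [Fin.card_Iic] at h3
      omega
    set σA : Fin o → ℝ := fun j => Real.sqrt (max (d (π j)) 0) with hσA
    set σB : Fin o → ℝ := fun j => Real.sqrt (max (-(d (π j))) 0) with hσB
    set Φ : Matrix (Fin o) (Fin o) ℝ := Matrix.of (fun i j => w0 (π j) i) with hΦ
    have hw : ∀ i j, w0 i ⬝ᵥ w0 j = if i = j then 1 else 0 := by
      have ho := φ0.orthonormal
      rw [orthonormal_iff_ite] at ho
      intro i j
      have h2 := ho i j
      rw [EuclideanSpace.inner_eq_star_dotProduct, dotProduct_comm] at h2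
      simpa [hw0] using h2
    have hΦorth : IsOrth Φ := by
      ext i j
      have h1 : (Φᵀ * Φ) i j = w0 (π i) ⬝ᵥ w0 (π j) := by
        simp [Matrix.mul_apply, Matrix.transpose_apply, hΦ, dotProduct]
      rw [h1, hw]
      simp [Matrix.one_apply, EmbeddingLike.apply_eq_iff_eq]
    have hΦΦt : Φ * Φᵀ = 1 := mul_eq_one_comm.mp hΦorth
    -- gram matrices
    have heigA : ∀ j, (Aᵀ * A) *ᵥ (fun i => Φ i j) = max (d (π j)) 0 • (fun i => Φ i j) :=
      fun j => (hsplit (π j)).1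
    have heigB : ∀ j, (Bᵀ * B) *ᵥ (fun i => Φ i j) = max (-(d (π j))) 0 • (fun i => Φ i j) :=
      fun j => (hsplit (π j)).2
    have hCA : (A * Φ)ᵀ * (A * Φ) = Matrix.diagonal (fun j => σA j ^ 2) := by
      have h1 : (A * Φ)ᵀ * (A * Φ) = Φᵀ * ((Aᵀ * A) * Φ) := by
        rw [Matrix.transpose_mul]
        simp only [Matrix.mul_assoc]
      rw [h1, Stmt13Aux2.gram_diag _ _ _ hΦorth heigA]
      have hfun : (fun j => σA j ^ 2) = fun j => max (d (π j)) 0 := by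
        funext j
        exact Real.sq_sqrt (le_max_right _ _)
      rw [hfun]
    have hCB : (B * Φ)ᵀ * (B * Φ) = Matrix.diagonal (fun j => σB j ^ 2) := by
      have h1 : (B * Φ)ᵀ * (B * Φ) = Φᵀ * ((Bᵀ * B) * Φ) := by
        rw [Matrix.transpose_mul]
        simp only [Matrix.mul_assoc]
      rw [h1, Stmt13Aux2.gram_diag _ _ _ hΦorth heigB]
      have hfun : (fun j => σB j ^ 2) = fun j => max (-(d (π j))) 0 := by
        funext j
        exact Real.sq_sqrt (le_max_right _ _)
      rw [hfun]
    have hsuppA : ∀ k, σA k ≠ 0 → (k : ℕ) < p := by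
      intro k hk
      apply hpos_lt
      by_contra hle
      push_neg at hle
      apply hk
      rw [hσA]
      simp only
      rw [max_eq_right hle, Real.sqrt_zero]
    have hsuppB : ∀ k : Fin o, σB k ≠ 0 → (k : ℕ) < q := fun k _ => lt_of_lt_of_le k.isLt hq
    obtain ⟨ΨA, hΨAorth, hΨA⟩ := Stmt13Aux.svd_step (A * Φ) σA hCA hsuppA
    obtain ⟨ΨB, hΨBorth, hΨB⟩ := Stmt13Aux.svd_step (B * Φ) σB hCB hsuppB
    refine ⟨ΨA, ΨB, Φ, Stmt13Aux.rdiag p σA, Stmt13Aux.rdiag q σB,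
      hΨAorth, hΨBorth, hΦorth, ?_, ?_, ?_, ?_, ?_⟩
    · constructor
      · intro i j hij
        simp [Stmt13Aux.rdiag, hij]
      · intro i j
        dsimp [Stmt13Aux.rdiag]
        split
        · exact Real.sqrt_nonneg _
        · exact le_refl 0
    · constructor
      · intro i j hij
        simp [Stmt13Aux.rdiag, hij]
      · intro i j
        dsimp [Stmt13Aux.rdiag]
        split
        · exact Real.sqrt_nonneg _
        · exact le_refl 0
    · have : A = (A * Φ) * Φᵀ := by rw [Matrix.mul_assoc, hΦΦt, Matrix.mul_one]
      rw [this, hΨA]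
    · have : B = (B * Φ) * Φᵀ := by rw [Matrix.mul_assoc, hΦΦt, Matrix.mul_one]
      rw [this, hΨB]
    · ext i j
      rw [Matrix.mul_apply]
      apply Finset.sum_eq_zero
      intro k _
      have hprod : σA k * σB k = 0 := by
        rw [hσA, hσB]
        simp only
        rw [← Real.sqrt_mul (le_max_right _ _)]
        rcases le_total (d (π k)) 0 with hle | hle
        · rw [max_eq_right hle, zero_mul, Real.sqrt_zero]
        · rw [max_eq_right (by linarith : -(d (π k)) ≤ 0), mul_zero, Real.sqrt_zero]
      by_cases h1 : (i : ℕ) = (k : ℕ) <;> by_cases h2 : (j : ℕ) = (k : ℕ) <;>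
        simp [Stmt13Aux.rdiag, h1, h2, hprod, Matrix.transpose_apply]
  · rintro ⟨PsiA, PsiB, Phi, SA, SB, hPA, hPB, hPhi, _, _, hAe, hBe, hSS⟩
    rw [hAe, hBe]
    have hexp : (PsiA * SA * Phiᵀ) * (PsiB * SB * Phiᵀ)ᵀ
        = PsiA * (SA * (Phiᵀ * Phi * (SBᵀ * PsiBᵀ))) := by
      simp only [Matrix.transpose_mul, Matrix.transpose_transpose, Matrix.mul_assoc]
    rw [hexp, hPhi, Matrix.one_mul, ← Matrix.mul_assoc SA SBᵀ, hSS, Matrix.zero_mul,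
      Matrix.mul_zero]
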